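/- arXiv:1411.1477 — 2 statements merged into one kernel-verified Lean document; each statement's English description precedes it below -/
import Mathlib

section
/- For all positive integers n, the double sum over integers i, j of binom(2n, n+i) * binom(2n, n+j) * |i * j * (i^2 - j^2)| equals (2 n^3 (n-1) / (2n-1)) * binom(2n, n)^2. -/
def ichoose (n : ℕ) (k : ℤ) : ℤ := if 0 ≤ k then (n.choose k.toNat : ℤ) else 0

lemma ichoose_zero_left (n : ℕ) (i : ℤ) (h : i < -(n:ℤ)) : ichoose (2*n) (n+i) = 0 := by
  rw [ichoose, if_neg]; omega

lemma ichoose_zero_right (n : ℕ) (i : ℤ) (h : (n:ℤ) < i) : ichoose (2*n) (n+i) = 0 := by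
  rw [ichoose, if_pos (by omega)]
  norm_cast
  apply Nat.choose_eq_zero_of_lt; omega

lemma ichoose_nat (N : ℕ) (m : ℕ) : ichoose N (m : ℤ) = N.choose m := by
  simp [ichoose]

lemma ichoose_neg (n : ℕ) (i : ℤ) : ichoose (2*n) (n + -i) = ichoose (2*n) (n + i) := by
  rcases lt_or_ge i (-(n:ℤ)) with h | h
  · rw [ichoose_zero_left n i h, ichoose_zero_right n (-i) (by omega)]
  rcases le_or_gt i (n:ℤ) with h2 | h2
  · rw [ichoose, if_pos (by omega), ichoose, if_pos (by omega)]
    have h3 : ((n:ℤ) + -i).toNat = 2*n - ((n:ℤ)+i).toNat := by omega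
    have h4 : ((n:ℤ)+i).toNat ≤ 2*n := by omega
    rw [h3, Nat.choose_symm h4]
  · rw [ichoose_zero_right n i h2, ichoose_zero_left n (-i) (by omega)]


-- b_k = C(2n-1, n+k), c_i = C(2n, n+i) as rationals
noncomputable def bb (n k : ℕ) : ℚ := ((2*n-1).choose (n+k) : ℚ)
noncomputable def cc (n i : ℕ) : ℚ := ((2*n).choose (n+i) : ℚ)

lemma bb_top (n : ℕ) (hn : 1 ≤ n) : bb n n = 0 := by
  rw [bb]; norm_cast
  apply Nat.choose_eq_zero_of_lt; omega

-- (n-1-k) * b k = (n+k+1) * b (k+1)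
lemma step1 (n : ℕ) (hn : 1 ≤ n) (k : ℕ) :
    ((n:ℚ) - 1 - k) * bb n k = ((n:ℚ) + k + 1) * bb n (k+1) := by
  rcases le_or_gt n k with h | h
  · have h1 : bb n k = 0 := by
      rw [bb]; norm_cast; apply Nat.choose_eq_zero_of_lt; omega
    have h2 : bb n (k+1) = 0 := by
      rw [bb]; norm_cast; apply Nat.choose_eq_zero_of_lt; omega
    rw [h1, h2]; ring
  · have key := Nat.choose_succ_right_eq (2*n-1) (n+k)
    have h3 : 2*n-1 - (n+k) = n - 1 - k := by omega
    rw [h3] at key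
    have := congrArg (fun x : ℕ => (x : ℚ)) key
    have hc : ((n - 1 - k : ℕ) : ℚ) = (n:ℚ) - 1 - (k:ℚ) := by
      have h5 : n - 1 - k = n - (k+1) := by omega
      rw [h5, Nat.cast_sub (by omega)]; push_cast; ring
    push_cast at this
    rw [hc] at this
    rw [bb, bb]
    push_cast
    rw [show n + (k+1) = n + k + 1 from rfl] at *
    push_cast at this
    linarith [this]

-- i * c i = n * (b (i-1) - b i), stated for i = a+1
lemma K1 (n : ℕ) (hn : 1 ≤ n) (a : ℕ) :
    ((a:ℚ) + 1) * cc n (a+1) = n * (bb n a - bb n (a+1)) := by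
  rcases le_or_gt n a with h | h
  · -- all three vanish
    have h1 : cc n (a+1) = 0 := by
      rw [cc]; norm_cast; apply Nat.choose_eq_zero_of_lt; omega
    have h2 : bb n a = 0 := by
      rw [bb]; norm_cast; apply Nat.choose_eq_zero_of_lt; omega
    have h3 : bb n (a+1) = 0 := by
      rw [bb]; norm_cast; apply Nat.choose_eq_zero_of_lt; omega
    rw [h1, h2, h3]; ring
  · -- (n+a+1) * c (a+1) = 2n * b a
    have e1 := Nat.add_one_mul_choose_eq (2*n-1) (n+a)
    -- (2n-1).succ = 2n ; (n+a).succ = n+a+1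
    have h2n : 2*n-1+1 = 2*n := by omega
    rw [h2n] at e1
    -- e1 : 2n * C(2n-1, n+a) = C(2n, n+a+1) * (n+a+1)
    have e2 := Nat.choose_mul_succ_eq (2*n-1) (n+a+1)
    rw [show 2*n-1+1 = 2*n by omega] at e2
    -- e2 : C(2n-1, n+a+1) * 2n = C(2n, n+a+1) * (2n - (n+a+1))
    have h4 : 2*n - (n+a+1) = n - (a+1) := by omega
    rw [h4] at e2
    have c1 := congrArg (fun x : ℕ => (x : ℚ)) e1
    have c2 := congrArg (fun x : ℕ => (x : ℚ)) e2
    push_cast [Nat.cast_sub (by omega : a+1 ≤ n)] at c1 c2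
    rw [bb, bb, cc]
    rw [show n + (a+1) = n + a + 1 from rfl] at *
    push_cast at c1 c2 ⊢
    linarith [c1, c2]




-- Abel: ∑ (a+1)^2 (f a - f (a+1)) = ∑ (2a+1) f a - n^2 f n
lemma abel (f : ℕ → ℚ) (n : ℕ) :
    ∑ a ∈ Finset.range n, ((a:ℚ)+1)^2 * (f a - f (a+1))
      = ∑ a ∈ Finset.range n, (2*(a:ℚ)+1) * f a - (n:ℚ)^2 * f n := by
  have key : ∀ a : ℕ, ((a:ℚ)+1)^2 * (f a - f (a+1))
      = (2*(a:ℚ)+1) * f a + ((a:ℚ)^2 * f a - ((a:ℚ)+1)^2 * f (a+1)) := by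
    intro a; ring
  rw [Finset.sum_congr rfl (fun a _ => key a), Finset.sum_add_distrib]
  have tele : ∑ a ∈ Finset.range n, ((a:ℚ)^2 * f a - ((a:ℚ)+1)^2 * f (a+1))
      = 0 - (n:ℚ)^2 * f n := by
    have := Finset.sum_range_sub' (fun a => (a:ℚ)^2 * f a) n
    simpa using this
  rw [tele]; ring

-- L1 : ∑_{k<n} (2k+1) b k = n b 0
lemma L1 (n : ℕ) (hn : 1 ≤ n) :
    ∑ k ∈ Finset.range n, (2*(k:ℚ)+1) * bb n k = n * bb n 0 := by
  have key : ∀ k : ℕ, (2*(k:ℚ)+1) * bb n k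
      = ((n:ℚ)+k) * bb n k - ((n:ℚ)+(k+1)) * bb n (k+1) := by
    intro k
    have := step1 n hn k
    push_cast
    linarith [this]
  rw [Finset.sum_congr rfl (fun k _ => key k)]
  have := Finset.sum_range_sub' (fun k => ((n:ℚ)+k) * bb n k) n
  push_cast at this ⊢
  rw [this, bb_top n hn]
  push_cast; ring

-- L2 : (2n-1) ∑_{k<n} (2k+1) b k ^2 = n^2 b 0 ^2
lemma L2 (n : ℕ) (hn : 1 ≤ n) :
    (2*(n:ℚ)-1) * ∑ k ∈ Finset.range n, (2*(k:ℚ)+1) * (bb n k)^2 = (n:ℚ)^2 * (bb n 0)^2 := by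
  have key : ∀ k : ℕ, (2*(n:ℚ)-1) * ((2*(k:ℚ)+1) * (bb n k)^2)
      = ((n:ℚ)+k)^2 * (bb n k)^2 - ((n:ℚ)+(k+1))^2 * (bb n (k+1))^2 := by
    intro k
    have h := step1 n hn k
    have h2 : (((n:ℚ) - 1 - k) * bb n k)^2 = (((n:ℚ) + k + 1) * bb n (k+1))^2 := by rw [h]
    push_cast
    nlinarith [h2]
  rw [Finset.mul_sum, Finset.sum_congr rfl (fun k _ => key k)]
  have := Finset.sum_range_sub' (fun k => ((n:ℚ)+k)^2 * (bb n k)^2) n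
  push_cast at this ⊢
  rw [this, bb_top n hn]
  push_cast; ring

-- telescoping over Ico: ∑_{a∈Ico m n} (f a - f (a+1)) = f m - f n
lemma tele_Ico (f : ℕ → ℚ) (m n : ℕ) (h : m ≤ n) :
    ∑ a ∈ Finset.Ico m n, (f a - f (a+1)) = f m - f n := by
  have key := Finset.sum_range_sub' (fun k => f (m + k)) (n - m)
  simp only [← Nat.add_assoc, Nat.add_zero, show m + (n-m) = n by omega] at key
  rw [Finset.sum_Ico_eq_sum_range, key]


lemma sum_Icc_even (n : ℕ) (g : ℤ → ℚ) (hg : ∀ i, g (-i) = g i) (h0 : g 0 = 0) :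
    ∑ i ∈ Finset.Icc (-(n:ℤ)) n, g i = 2 * ∑ i ∈ Finset.Icc (1:ℤ) n, g i := by
  have h1 : Finset.Icc (-(n:ℤ)) n = Finset.Icc (-(n:ℤ)) (-1) ∪ Finset.Icc 0 n := by
    ext x; simp; omega
  have hd : Disjoint (Finset.Icc (-(n:ℤ)) (-1)) (Finset.Icc (0:ℤ) n) := by
    rw [Finset.disjoint_left]; intro a ha hb; simp at ha hb; omega
  have h2 : Finset.Icc (0:ℤ) n = insert (0:ℤ) (Finset.Icc (1:ℤ) (n:ℤ)) := by
    ext x; simp; omega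
  have h3 : ∑ i ∈ Finset.Icc (-(n:ℤ)) (-1), g i = ∑ i ∈ Finset.Icc (1:ℤ) n, g i := by
    apply Finset.sum_nbij' (fun i => -i) (fun i => -i)
    · intro a ha; simp at ha ⊢; omega
    · intro a ha; simp at ha ⊢; omega
    · intro a _; ring
    · intro a _; ring
    · intro a _; rw [hg]
  rw [h1, Finset.sum_union hd, h3, h2, Finset.sum_insert (by simp), h0]
  ring

lemma sum_Icc_int_range (n : ℕ) (h : ℤ → ℚ) :
    ∑ i ∈ Finset.Icc (1:ℤ) n, h i = ∑ k ∈ Finset.range n, h (k+1) := by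
  apply Finset.sum_nbij' (g := fun k : ℕ => h ((k:ℤ)+1)) (fun i => (i-1).toNat) (fun k => (k:ℤ)+1)
  · intro a ha; simp at ha ⊢; omega
  · intro a ha; simp at ha ⊢; omega
  · intro a ha; simp at ha; omega
  · intro a ha; simp
  · intro a ha; simp at ha; congr 1; omega

lemma tri_swap (n : ℕ) (F : ℕ → ℕ → ℚ) :
    ∑ a ∈ Finset.range n, ∑ b ∈ Finset.range a, F a b
      = ∑ b ∈ Finset.range n, ∑ a ∈ Finset.Ico (b+1) n, F a b := by
  rw [Finset.sum_sigma', Finset.sum_sigma']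
  apply Finset.sum_nbij' (fun p => ⟨p.2, p.1⟩) (fun p => ⟨p.2, p.1⟩)
  · rintro ⟨a, b⟩ h; simp [Finset.mem_sigma] at h ⊢; omega
  · rintro ⟨b, a⟩ h; simp [Finset.mem_sigma] at h ⊢; omega
  · rintro ⟨a, b⟩ _; rfl
  · rintro ⟨b, a⟩ _; rfl
  · rintro ⟨a, b⟩ _; rfl

lemma square_split (n : ℕ) (F : ℕ → ℕ → ℚ) (hsymm : ∀ a b, F a b = F b a)
    (hdiag : ∀ a, F a a = 0) :
    ∑ a ∈ Finset.range n, ∑ b ∈ Finset.range n, F a b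
      = 2 * ∑ a ∈ Finset.range n, ∑ b ∈ Finset.range a, F a b := by
  have key : ∀ a ∈ Finset.range n, ∑ b ∈ Finset.range n, F a b
      = ∑ b ∈ Finset.range a, F a b + ∑ b ∈ Finset.Ico (a+1) n, F a b := by
    intro a ha
    simp only [Finset.mem_range] at ha
    rw [Finset.range_eq_Ico, ← Finset.sum_Ico_consecutive _ (Nat.zero_le a) ha.le,
      ← Finset.sum_Ico_consecutive _ (Nat.le_succ a) ha, ← Finset.range_eq_Ico]
    have : ∑ b ∈ Finset.Ico a (a+1), F a b = 0 := by
      rw [show Finset.Ico a (a+1) = {a} by ext x; simp]; simp [hdiag]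
    rw [this]; ring
  rw [Finset.sum_congr rfl key, Finset.sum_add_distrib]
  have h2 : ∑ a ∈ Finset.range n, ∑ b ∈ Finset.Ico (a+1) n, F a b
      = ∑ a ∈ Finset.range n, ∑ b ∈ Finset.range a, F a b := by
    exact (tri_swap n (fun a b => F b a)).symm.trans
      (Finset.sum_congr rfl fun a _ => Finset.sum_congr rfl fun b _ => hsymm b a)
  rw [h2]; ring

lemma choose_central (n : ℕ) (hn : 1 ≤ n) : (((2*n).choose n : ℕ) : ℚ) = 2 * bb n 0 := by
  obtain ⟨m, rfl⟩ : ∃ m, n = m+1 := ⟨n-1, by omega⟩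
  have h1 : 2*(m+1) = (2*m+1) + 1 := by ring
  rw [bb, show 2*(m+1)-1 = 2*m+1 by omega, show (m+1)+0 = m+1 by ring, h1]
  rw [show (2*m+1)+1 = (2*m)+1+1 by ring, Nat.choose_succ_succ]
  have h2 : (2*m+1).choose m = (2*m+1).choose (m+1) := by
    have := Nat.choose_symm (show m+1 ≤ 2*m+1 by omega)
    rw [show 2*m+1 - (m+1) = m by omega] at this
    exact this
  rw [h2]
  push_cast
  ring

theorem stmt17 (n : ℕ) (hn : 1 ≤ n) :
    ∑ᶠ i : ℤ, ∑ᶠ j : ℤ,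
        ((ichoose (2 * n) (n + i) : ℚ) * (ichoose (2 * n) (n + j) : ℚ)
          * |(i : ℚ) * (j : ℚ) * ((i : ℚ) ^ 2 - (j : ℚ) ^ 2)|)
      = 2 * (n : ℚ) ^ 3 * ((n : ℚ) - 1) / (2 * n - 1) * ((2 * n).choose n : ℚ) ^ 2 := by
  set F : ℤ → ℤ → ℚ := fun i j =>
    ((ichoose (2 * n) (n + i) : ℚ) * (ichoose (2 * n) (n + j) : ℚ)
          * |(i : ℚ) * (j : ℚ) * ((i : ℚ) ^ 2 - (j : ℚ) ^ 2)|) with hFdef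
  have hzero : ∀ j : ℤ, (j < -(n:ℤ) ∨ (n:ℤ) < j) → ((ichoose (2*n) ((n:ℤ)+j) : ℤ) : ℚ) = 0 := by
    intro j hj
    rcases hj with h | h
    · rw [ichoose_zero_left n j h]; simp
    · rw [ichoose_zero_right n j h]; simp
  -- evenness and vanishing of F
  have hFnegi : ∀ i j : ℤ, F (-i) j = F i j := by
    intro i j
    simp only [hFdef]
    rw [ichoose_neg]
    congr 1
    push_cast
    rw [show (-(i:ℚ)) * (j:ℚ) * ((-(i:ℚ))^2 - (j:ℚ)^2)
        = -((i:ℚ) * (j:ℚ) * ((i:ℚ)^2 - (j:ℚ)^2)) by ring, abs_neg]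
  have hFnegj : ∀ i j : ℤ, F i (-j) = F i j := by
    intro i j
    simp only [hFdef]
    rw [ichoose_neg]
    congr 1
    push_cast
    rw [show ((i:ℚ)) * (-(j:ℚ)) * (((i:ℚ))^2 - (-(j:ℚ))^2)
        = -((i:ℚ) * (j:ℚ) * ((i:ℚ)^2 - (j:ℚ)^2)) by ring, abs_neg]
  have hF0 : ∀ j : ℤ, F 0 j = 0 := by intro j; simp [hFdef]
  have hF0' : ∀ i : ℤ, F i 0 = 0 := by intro i; simp [hFdef]
  have hFsymm : ∀ i j : ℤ, F i j = F j i := by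
    intro i j
    simp only [hFdef]
    rw [show ((i:ℚ)) * ((j:ℚ)) * (((i:ℚ))^2 - ((j:ℚ))^2)
        = -((j:ℚ) * (i:ℚ) * ((j:ℚ)^2 - (i:ℚ)^2)) by ring, abs_neg]
    ring
  -- step 1 : reduce finsums to finite sums
  have hsuppj : ∀ i : ℤ, Function.support (fun j => F i j) ⊆ ↑(Finset.Icc (-(n:ℤ)) n) := by
    intro i x hx
    simp only [Function.mem_support] at hx
    simp only [Finset.coe_Icc, Set.mem_Icc]
    constructor <;> by_contra h <;> push_neg at h
    · exact hx (by rw [hFdef]; simp only; rw [hzero x (Or.inl (by omega))]; ring)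
    · exact hx (by rw [hFdef]; simp only; rw [hzero x (Or.inr (by omega))]; ring)
  have hsuppi : Function.support (fun i => ∑ j ∈ Finset.Icc (-(n:ℤ)) n, F i j)
      ⊆ ↑(Finset.Icc (-(n:ℤ)) n) := by
    intro x hx
    simp only [Function.mem_support] at hx
    simp only [Finset.coe_Icc, Set.mem_Icc]
    constructor <;> by_contra h <;> push_neg at h
    · exact hx (Finset.sum_eq_zero fun j _ => by
        rw [hFdef]; simp only; rw [hzero x (Or.inl (by omega))]; ring)
    · exact hx (Finset.sum_eq_zero fun j _ => by
        rw [hFdef]; simp only; rw [hzero x (Or.inr (by omega))]; ring)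
  have step₁ : (∑ᶠ i : ℤ, ∑ᶠ j : ℤ, F i j)
      = ∑ i ∈ Finset.Icc (-(n:ℤ)) n, ∑ j ∈ Finset.Icc (-(n:ℤ)) n, F i j := by
    rw [finsum_congr (fun i => finsum_eq_sum_of_support_subset _ (hsuppj i))]
    exact finsum_eq_sum_of_support_subset _ hsuppi
  rw [show (∑ᶠ i : ℤ, ∑ᶠ j : ℤ,
        ((ichoose (2 * n) (n + i) : ℚ) * (ichoose (2 * n) (n + j) : ℚ)
          * |(i : ℚ) * (j : ℚ) * ((i : ℚ) ^ 2 - (j : ℚ) ^ 2)|))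
      = ∑ᶠ i : ℤ, ∑ᶠ j : ℤ, F i j from rfl, step₁]
  -- step 2 : symmetry reduction to positive indices
  have step₂ : ∑ i ∈ Finset.Icc (-(n:ℤ)) n, ∑ j ∈ Finset.Icc (-(n:ℤ)) n, F i j
      = 4 * ∑ i ∈ Finset.Icc (1:ℤ) n, ∑ j ∈ Finset.Icc (1:ℤ) n, F i j := by
    rw [sum_Icc_even n _ (fun i => Finset.sum_congr rfl fun j _ => hFnegi i j)
      (Finset.sum_eq_zero fun j _ => hF0 j)]
    rw [Finset.sum_congr rfl (fun i _ => sum_Icc_even n (fun j => F i j)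
      (fun j => hFnegj i j) (hF0' i)), ← Finset.mul_sum]
    ring
  rw [step₂]
  -- step 3 : reindex to ℕ
  rw [sum_Icc_int_range n (fun i => ∑ j ∈ Finset.Icc (1:ℤ) n, F i j)]
  have step₃ : (∑ k ∈ Finset.range n, ∑ j ∈ Finset.Icc (1:ℤ) n, F ((k:ℤ)+1) j)
      = ∑ a ∈ Finset.range n, ∑ b ∈ Finset.range n, F ((a:ℤ)+1) ((b:ℤ)+1) :=
    Finset.sum_congr rfl fun a _ => sum_Icc_int_range n (fun j => F ((a:ℤ)+1) j)
  rw [step₃]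
  -- step 4 : split square into triangles
  rw [square_split n (fun a b => F ((a:ℤ)+1) ((b:ℤ)+1))
      (fun a b => hFsymm _ _)
      (fun a => by
        rw [hFdef]; simp only
        rw [show ((((a:ℤ)+1 : ℤ)):ℚ) * ((((a:ℤ)+1 : ℤ)):ℚ)
            * (((((a:ℤ)+1 : ℤ)):ℚ)^2 - ((((a:ℤ)+1 : ℤ)):ℚ)^2) = 0 by ring]
        simp)]
  -- step 5 : rewrite terms of the triangular sum and remove the absolute value
  have hcast : ∀ a : ℕ, ((ichoose (2*n) ((n:ℤ) + ((a:ℤ)+1)) : ℤ) : ℚ) = cc n (a+1) := by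
    intro a
    rw [show (n:ℤ) + ((a:ℤ)+1) = ((n + (a+1) : ℕ) : ℤ) by push_cast; ring, ichoose_nat, cc]
    push_cast
    ring
  have hterm : ∀ a b : ℕ, b < a → F ((a:ℤ)+1) ((b:ℤ)+1)
      = (((a:ℚ)+1) * cc n (a+1)) * (((b:ℚ)+1) * cc n (b+1))
        * (((a:ℚ)+1)^2 - ((b:ℚ)+1)^2) := by
    intro a b hab
    rw [hFdef]; simp only
    rw [hcast a, hcast b]
    push_cast
    have hba : (b:ℚ) < (a:ℚ) := by exact_mod_cast hab
    have h1 : (0:ℚ) ≤ (b:ℚ)+1 := by positivity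
    have h2 : (0:ℚ) ≤ (a:ℚ)+1 := by positivity
    have h3 : (0:ℚ) ≤ ((a:ℚ)+1)^2 - ((b:ℚ)+1)^2 := by nlinarith
    rw [abs_of_nonneg (mul_nonneg (mul_nonneg h2 h1) h3)]
    ring
  have step₄ : ∑ a ∈ Finset.range n, ∑ b ∈ Finset.range a, F ((a:ℤ)+1) ((b:ℤ)+1)
      = ∑ a ∈ Finset.range n, ∑ b ∈ Finset.range a,
          (((a:ℚ)+1) * cc n (a+1)) * (((b:ℚ)+1) * cc n (b+1))
            * (((a:ℚ)+1)^2 - ((b:ℚ)+1)^2) :=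
    Finset.sum_congr rfl fun a _ => Finset.sum_congr rfl fun b hb =>
      hterm a b (Finset.mem_range.mp hb)
  rw [step₄]
  -- step 6 : telescoping machinery
  have hw : ∀ a : ℕ, ((a:ℚ)+1) * cc n (a+1) = n * (bb n a - bb n (a+1)) := K1 n hn
  have hSb : ∀ a : ℕ, ∑ b ∈ Finset.range a, ((b:ℚ)+1) * cc n (b+1)
      = n * bb n 0 - n * bb n a := by
    intro a
    calc ∑ b ∈ Finset.range a, ((b:ℚ)+1) * cc n (b+1)
        = ∑ b ∈ Finset.range a, ((n:ℚ) * bb n b - (n:ℚ) * bb n (b+1)) :=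
          Finset.sum_congr rfl fun b _ => by rw [hw b]; ring
      _ = n * bb n 0 - n * bb n a := by
          simpa using Finset.sum_range_sub' (fun b => (n:ℚ) * bb n b) a
  have hIco : ∀ b : ℕ, b < n → ∑ a ∈ Finset.Ico (b+1) n, ((a:ℚ)+1) * cc n (a+1)
      = n * bb n (b+1) := by
    intro b hb
    calc ∑ a ∈ Finset.Ico (b+1) n, ((a:ℚ)+1) * cc n (a+1)
        = ∑ a ∈ Finset.Ico (b+1) n, ((n:ℚ) * bb n a - (n:ℚ) * bb n (a+1)) :=
          Finset.sum_congr rfl fun a _ => by rw [hw a]; ring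
      _ = (n:ℚ) * bb n (b+1) - (n:ℚ) * bb n n := tele_Ico (fun a => (n:ℚ) * bb n a) (b+1) n hb
      _ = n * bb n (b+1) := by rw [bb_top n hn]; ring
  -- split the triangular sum
  have split : ∑ a ∈ Finset.range n, ∑ b ∈ Finset.range a,
        (((a:ℚ)+1) * cc n (a+1)) * (((b:ℚ)+1) * cc n (b+1)) * (((a:ℚ)+1)^2 - ((b:ℚ)+1)^2)
      = (∑ a ∈ Finset.range n, (((a:ℚ)+1) * cc n (a+1)) * ((a:ℚ)+1)^2
            * (∑ b ∈ Finset.range a, ((b:ℚ)+1) * cc n (b+1)))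
        - ∑ a ∈ Finset.range n, ∑ b ∈ Finset.range a,
            ((((b:ℚ)+1) * cc n (b+1)) * ((b:ℚ)+1)^2) * (((a:ℚ)+1) * cc n (a+1)) := by
    rw [← Finset.sum_sub_distrib]
    apply Finset.sum_congr rfl; intro a _
    rw [Finset.mul_sum, ← Finset.sum_sub_distrib]
    apply Finset.sum_congr rfl; intro b _
    ring
  have swap2 : ∑ a ∈ Finset.range n, ∑ b ∈ Finset.range a,
        ((((b:ℚ)+1) * cc n (b+1)) * ((b:ℚ)+1)^2) * (((a:ℚ)+1) * cc n (a+1))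
      = ∑ b ∈ Finset.range n,
          ((((b:ℚ)+1) * cc n (b+1)) * ((b:ℚ)+1)^2) * ((n:ℚ) * bb n (b+1)) := by
    rw [tri_swap n (fun a b => ((((b:ℚ)+1) * cc n (b+1)) * ((b:ℚ)+1)^2) * (((a:ℚ)+1) * cc n (a+1)))]
    apply Finset.sum_congr rfl; intro b hb
    rw [← Finset.mul_sum, hIco b (Finset.mem_range.mp hb)]
  rw [split, swap2]
  have sb_rw : ∑ a ∈ Finset.range n, (((a:ℚ)+1) * cc n (a+1)) * ((a:ℚ)+1)^2
        * (∑ b ∈ Finset.range a, ((b:ℚ)+1) * cc n (b+1))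
      = ∑ a ∈ Finset.range n, (((a:ℚ)+1) * cc n (a+1)) * ((a:ℚ)+1)^2
        * ((n:ℚ) * bb n 0 - (n:ℚ) * bb n a) :=
    Finset.sum_congr rfl fun a _ => by rw [hSb a]
  rw [sb_rw]
  -- step 7 : evaluate the remaining single sums
  have hEA : ∑ a ∈ Finset.range n, ((a:ℚ)+1)^2 * (bb n a - bb n (a+1)) = n * bb n 0 := by
    rw [abel (fun a => bb n a) n, L1 n hn, bb_top n hn]; ring
  have hEB : ∑ a ∈ Finset.range n, ((a:ℚ)+1)^2 * ((bb n a)^2 - (bb n (a+1))^2)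
      = ∑ a ∈ Finset.range n, (2*(a:ℚ)+1) * (bb n a)^2 := by
    rw [abel (fun a => (bb n a)^2) n, bb_top n hn]; ring
  have combine : ∑ a ∈ Finset.range n, (((a:ℚ)+1) * cc n (a+1)) * ((a:ℚ)+1)^2
        * ((n:ℚ) * bb n 0 - (n:ℚ) * bb n a)
      - ∑ b ∈ Finset.range n, ((((b:ℚ)+1) * cc n (b+1)) * ((b:ℚ)+1)^2) * ((n:ℚ) * bb n (b+1))
      = (n:ℚ)^2 * ((bb n 0) * (∑ a ∈ Finset.range n, ((a:ℚ)+1)^2 * (bb n a - bb n (a+1)))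
          - ∑ a ∈ Finset.range n, ((a:ℚ)+1)^2 * ((bb n a)^2 - (bb n (a+1))^2)) := by
    rw [← Finset.sum_sub_distrib, Finset.mul_sum, ← Finset.sum_sub_distrib, Finset.mul_sum]
    apply Finset.sum_congr rfl; intro a _
    rw [hw a]
    ring
  rw [combine, hEA, hEB]
  -- step 8 : final arithmetic
  have hQ := L2 n hn
  have hC := choose_central n hn
  have h1 : (1:ℚ) ≤ (n:ℚ) := by exact_mod_cast hn
  have hd : (2*(n:ℚ) - 1) ≠ 0 := by intro h; linarith
  rw [hC]
  field_simp
  linear_combination (-4) * hQ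
end

section
/- For all positive integers n, the double sum over integers i, j of binom(2n, n+i) * binom(2n, n+j) * |i^2 * j^2 * (i^2 - j^2)| equals (2 n^4 (n-1) / (2n-1)) * binom(2n, n)^2. -/
open Finset

namespace Stmt18

def cq (n k : ℕ) : ℚ := ((2 * n).choose (n + k) : ℚ)
def bq (n m : ℕ) : ℚ := ((2 * n - 1).choose (n + m - 1) : ℚ)
def eqq (n m : ℕ) : ℚ := ((2 * n - 2).choose (n + m - 2) : ℚ)

variable {n : ℕ}

lemma bq_top (hn : 1 ≤ n) : bq n (n + 1) = 0 := by
  unfold bq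
  rw [Nat.choose_eq_zero_of_lt (by omega)]
  simp

lemma eqq_top (hn : 1 ≤ n) : eqq n (n + 1) = 0 := by
  unfold eqq
  rw [Nat.choose_eq_zero_of_lt (by omega)]
  simp

lemma habs1 (hn : 1 ≤ n) {m : ℕ} (hm : 1 ≤ m) :
    ((n : ℚ) + m - 1) * bq n m = (2 * n - 1) * eqq n m := by
  have h := Nat.add_one_mul_choose_eq (2 * n - 2) (n + m - 2)
  rw [show (2 * n - 2) + 1 = 2 * n - 1 by omega, show (n + m - 2) + 1 = n + m - 1 by omega] at h
  qify [show (1:ℕ) ≤ 2*n by omega, show (1:ℕ) ≤ n + m by omega] at h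
  unfold bq eqq
  linear_combination -h

lemma hpas_be (hn : 1 ≤ n) {m : ℕ} (hm : 1 ≤ m) :
    bq n m = eqq n m + eqq n (m + 1) := by
  have h := Nat.choose_succ_succ (2 * n - 2) (n + m - 2)
  rw [show (2 * n - 2).succ = 2 * n - 1 by omega, show (n + m - 2).succ = n + m - 1 by omega] at h
  have h3 : n + (m + 1) - 2 = n + m - 1 := by omega
  unfold bq eqq
  rw [h3]
  qify at h
  linear_combination h

lemma habs2 (hn : 1 ≤ n) {m : ℕ} (hm : 1 ≤ m) :
    ((n : ℚ) - m) * bq n m = (2 * n - 1) * eqq n (m + 1) := by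
  have h1 := habs1 hn hm
  have h2 := hpas_be hn hm
  linear_combination -h1 + (2 * (n:ℚ) - 1) * h2

lemma hb (hn : 1 ≤ n) {m : ℕ} (hm : 1 ≤ m) :
    ((n : ℚ) + m) * bq n (m + 1) = ((n : ℚ) - m) * bq n m := by
  have h1 := habs1 hn (show 1 ≤ m + 1 by omega)
  have h2 := habs2 hn hm
  push_cast at h1
  linear_combination h1 - h2

lemma hb2 (hn : 1 ≤ n) {m : ℕ} (hm : 1 ≤ m) :
    ((n : ℚ) + m) ^ 2 * bq n (m + 1) ^ 2 = ((n : ℚ) - m) ^ 2 * bq n m ^ 2 := by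
  have h := hb hn hm (m := m)
  calc ((n : ℚ) + m) ^ 2 * bq n (m + 1) ^ 2 = (((n : ℚ) + m) * bq n (m + 1)) ^ 2 := by ring
    _ = (((n : ℚ) - m) * bq n m) ^ 2 := by rw [h]
    _ = ((n : ℚ) - m) ^ 2 * bq n m ^ 2 := by ring

lemma hpas_cb (hn : 1 ≤ n) {m : ℕ} (hm : 1 ≤ m) :
    cq n m = bq n m + bq n (m + 1) := by
  have h := Nat.choose_succ_succ (2 * n - 1) (n + m - 1)
  rw [show (2 * n - 1).succ = 2 * n by omega, show (n + m - 1).succ = n + m by omega] at h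
  have h3 : n + (m + 1) - 1 = n + m := by omega
  unfold cq bq
  rw [h3]
  qify at h
  linear_combination h

lemma bq_one : bq n 1 = ((2 * n - 1).choose n : ℚ) := by
  unfold bq; congr 2

lemma eqq_one : eqq n 1 = ((2 * n - 2).choose (n - 1) : ℚ) := by
  unfold eqq; congr 2

lemma hCC (hn : 1 ≤ n) : (((2 * n).choose n : ℕ) : ℚ) = 2 * bq n 1 := by
  have h := Nat.choose_succ_succ (2 * n - 1) (n - 1)
  rw [show (2 * n - 1).succ = 2 * n by omega, show (n - 1).succ = n by omega] at h
  have hsymm : (2 * n - 1).choose (n - 1) = (2 * n - 1).choose n := by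
    rw [show n - 1 = (2 * n - 1) - n by omega]
    exact Nat.choose_symm (by omega)
  rw [hsymm] at h
  rw [bq_one]
  qify at h
  linear_combination h


/-! ### Telescoping -/

lemma tele (g F : ℕ → ℚ) (a b : ℕ) (hab : a ≤ b)
    (h : ∀ k, a ≤ k → k < b → F k = g k - g (k + 1)) :
    ∑ k ∈ Ico a b, F k = g a - g b := by
  induction b, hab using Nat.le_induction with
  | base => simp
  | succ b hab ih =>
      rw [Finset.sum_Ico_succ_top hab, ih (fun k hk hk' => h k hk (by omega)),
        h b hab (by omega)]
      ring

lemma teleIcc (g F : ℕ → ℚ) (m N : ℕ) (hmn : m ≤ N + 1)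
    (h : ∀ k, m ≤ k → k ≤ N → F k = g k - g (k + 1)) :
    ∑ k ∈ Icc m N, F k = g m - g (N + 1) := by
  rw [← Finset.Ico_add_one_right_eq_Icc]
  exact tele g F m (N + 1) hmn (fun k hk hk' => h k hk (by omega))

/-! ### tail sums -/

lemma hG3 (hn : 1 ≤ n) {m : ℕ} (hm : 1 ≤ m) (hmn : m ≤ n + 1) :
    ∑ k ∈ Icc m n, (k : ℚ) ^ 3 * cq n k
      = n * ((m : ℚ) ^ 2 - m + n) * bq n m := by
  have := teleIcc (fun k => (n : ℚ) * ((k : ℚ) ^ 2 - k + n) * bq n k)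
    (fun k => (k : ℚ) ^ 3 * cq n k) m n hmn ?_
  · beta_reduce at this
    rw [this, bq_top hn]; push_cast; ring
  · intro k hk hkn
    beta_reduce
    rw [hpas_cb hn (by omega)]
    have h := hb hn (show 1 ≤ k by omega) (m := k)
    push_cast
    linear_combination ((k:ℚ)^2 + n) * h

lemma hScc (hn : 1 ≤ n) {m : ℕ} (hm : 1 ≤ m) (hmn : m ≤ n + 1) :
    ∑ k ∈ Icc m n, cq n k = 2 * (∑ k ∈ Icc m n, bq n k) - bq n m := by
  have := teleIcc (fun k => -bq n k) (fun k => cq n k - 2 * bq n k) m n hmn ?_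
  · beta_reduce at this
    rw [Finset.sum_sub_distrib, ← Finset.mul_sum] at this
    rw [bq_top hn] at this
    linarith [this]
  · intro k hk hkn
    beta_reduce
    rw [hpas_cb hn (by omega)]
    ring

lemma hG2aux (hn : 1 ≤ n) {m : ℕ} (hm : 1 ≤ m) (hmn : m ≤ n + 1) :
    ∑ k ∈ Icc m n, (2 * (k : ℚ) ^ 2 - n) * cq n k
      = n * (2 * (m : ℚ) - 1) * bq n m := by
  have := teleIcc (fun k => (n : ℚ) * (2 * (k : ℚ) - 1) * bq n k)
    (fun k => (2 * (k : ℚ) ^ 2 - n) * cq n k) m n hmn ?_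
  · beta_reduce at this
    rw [this, bq_top hn]; push_cast; ring
  · intro k hk hkn
    beta_reduce
    rw [hpas_cb hn (by omega)]
    have h := hb hn (show 1 ≤ k by omega) (m := k)
    push_cast
    linear_combination 2 * (k:ℚ) * h

lemma hG2 (hn : 1 ≤ n) {m : ℕ} (hm : 1 ≤ m) (hmn : m ≤ n + 1) :
    ∑ k ∈ Icc m n, (k : ℚ) ^ 2 * cq n k
      = n * ((m : ℚ) - 1) * bq n m + n * ∑ k ∈ Icc m n, bq n k := by
  have h1 := hG2aux hn hm hmn
  have h2 := hScc hn hm hmn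
  have expand : ∀ k ∈ Icc m n, (2 * (k : ℚ) ^ 2 - n) * cq n k
      = 2 * ((k:ℚ)^2 * cq n k) - n * cq n k := by intro k _; ring
  rw [Finset.sum_congr rfl expand, Finset.sum_sub_distrib, ← Finset.mul_sum, ← Finset.mul_sum] at h1
  rw [h2] at h1
  linarith [h1]

lemma hG4 (hn : 1 ≤ n) {m : ℕ} (hm : 1 ≤ m) (hmn : m ≤ n + 1) :
    ∑ k ∈ Icc m n, (4 * (k : ℚ) ^ 4 - n * (3 * n - 1)) * cq n k
      = (4 * n * (m:ℚ)^3 - 6 * n * (m:ℚ)^2 + 6 * (n:ℚ)^2 * m - n * (3 * n - 1)) * bq n m := by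
  have := teleIcc
    (fun k => (4 * (n:ℚ) * (k:ℚ)^3 - 6 * n * (k:ℚ)^2 + 6 * (n:ℚ)^2 * k - n * (3 * n - 1)) * bq n k)
    (fun k => (4 * (k : ℚ) ^ 4 - n * (3 * n - 1)) * cq n k) m n hmn ?_
  · beta_reduce at this
    rw [this, bq_top hn]; push_cast; ring
  · intro k hk hkn
    beta_reduce
    rw [hpas_cb hn (by omega)]
    have h := hb hn (show 1 ≤ k by omega) (m := k)
    push_cast
    linear_combination (4 * (k:ℚ)^3 + 6 * n * k) * h

lemma hH1 (hn : 1 ≤ n) {m : ℕ} (hm : 1 ≤ m) (hmn : m ≤ n + 1) :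
    ∑ i ∈ Icc m n, (2 * (i : ℚ) - 1) * bq n i = (2 * (n : ℚ) - 1) * eqq n m := by
  have := teleIcc (fun k => (2 * (n : ℚ) - 1) * eqq n k)
    (fun k => (2 * (k : ℚ) - 1) * bq n k) m n hmn ?_
  · beta_reduce at this
    rw [this, eqq_top hn]; ring
  · intro k hk hkn
    beta_reduce
    have h1 := habs1 hn (show 1 ≤ k by omega) (n := n)
    have h2 := habs2 hn (show 1 ≤ k by omega) (n := n)
    linear_combination h1 - h2

lemma hRE (hn : 1 ≤ n) {m : ℕ} (hm : 1 ≤ m) (hmn : m ≤ n + 1) :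
    ∑ k ∈ Icc m n, bq n k = 2 * (∑ k ∈ Icc m n, eqq n k) - eqq n m := by
  have := teleIcc (fun k => -eqq n k) (fun k => bq n k - 2 * eqq n k) m n hmn ?_
  · beta_reduce at this
    rw [Finset.sum_sub_distrib, ← Finset.mul_sum] at this
    rw [eqq_top hn] at this
    linarith [this]
  · intro k hk hkn
    beta_reduce
    rw [hpas_be hn (by omega)]
    ring

/-! ### weighted b² sums -/

lemma hV10 (hn : 1 ≤ n) :
    ∑ m ∈ Icc 1 n, (2 * (n:ℚ) - 1) * (2 * (m:ℚ) - 1) * bq n m ^ 2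
      = (n:ℚ) ^ 2 * bq n 1 ^ 2 := by
  have := teleIcc (fun m => ((m:ℚ) + n - 1) ^ 2 * bq n m ^ 2)
    (fun m => (2 * (n:ℚ) - 1) * (2 * (m:ℚ) - 1) * bq n m ^ 2) 1 n (by omega) ?_
  · beta_reduce at this
    rw [this, bq_top hn]; push_cast; ring
  · intro k hk hkn
    beta_reduce
    have h := hb2 hn (show 1 ≤ k by omega) (m := k)
    push_cast
    linear_combination h

lemma hV11 (hn2 : 2 ≤ n) :
    ∑ m ∈ Icc 1 n, ((n:ℚ) - 1) * (2 * n - 1) * (2 * (m:ℚ) - 1) ^ 3 * bq n m ^ 2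
      = (n:ℚ) ^ 2 * ((n:ℚ) - 1) * (2 * (n:ℚ) - 1) * bq n 1 ^ 2 := by
  have hn : 1 ≤ n := by omega
  have := teleIcc (fun m => -((-2*(n:ℚ)^4+3*(n:ℚ)^3+(n:ℚ)^2-3*(n:ℚ)+1)
      + (4*(n:ℚ)^3-18*(n:ℚ)^2+20*(n:ℚ)-6) * m
      + (-4*(n:ℚ)^3+24*(n:ℚ)^2-33*(n:ℚ)+11) * (m:ℚ)^2
      + (-8*(n:ℚ)^2+20*(n:ℚ)-8) * (m:ℚ)^3
      + (2-4*(n:ℚ)) * (m:ℚ)^4) * bq n m ^ 2)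
    (fun m => ((n:ℚ) - 1) * (2 * n - 1) * (2 * (m:ℚ) - 1) ^ 3 * bq n m ^ 2) 1 n (by omega) ?_
  · beta_reduce at this
    rw [this, bq_top hn]; push_cast; ring
  · intro k hk hkn
    beta_reduce
    have h := hb2 hn (show 1 ≤ k by omega) (m := k)
    push_cast
    linear_combination (2*(n:ℚ)-1) * (2*(k:ℚ)^2 + n - 1) * h

lemma hV12 (hn : 1 ≤ n) :
    ∑ m ∈ Icc 1 n, (2 * (4*(n:ℚ) - 3) * (2 * (m:ℚ) - 1) ^ 2 - 2 * (2*(n:ℚ)-1)^2) * bq n m ^ 2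
      = 0 := by
  have := teleIcc (fun m => -((8*(n:ℚ)^2-16*n+8) + (-8*(n:ℚ)^2+32*n-24) * m
      + (24-16*(n:ℚ)) * (m:ℚ)^2 - 8 * (m:ℚ)^3) * bq n m ^ 2)
    (fun m => (2 * (4*(n:ℚ) - 3) * (2 * (m:ℚ) - 1) ^ 2 - 2 * (2*(n:ℚ)-1)^2) * bq n m ^ 2)
    1 n (by omega) ?_
  · beta_reduce at this
    rw [this, bq_top hn]; push_cast; ring
  · intro k hk hkn
    beta_reduce
    have h := hb2 hn (show 1 ≤ k by omega) (m := k)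
    push_cast
    linear_combination 8 * (k:ℚ) * h

lemma hV8 (hn : 1 ≤ n) :
    ∑ m ∈ Icc 1 n, (2 * (n:ℚ) - 1) * ((2 * (m:ℚ) - 1) ^ 2 - (2 * (n:ℚ) - 1)) * bq n m
      = 0 := by
  have := teleIcc (fun m => 2 * (2*(n:ℚ)-1)^2 * ((m:ℚ) - 1) * eqq n m)
    (fun m => (2 * (n:ℚ) - 1) * ((2 * (m:ℚ) - 1) ^ 2 - (2 * (n:ℚ) - 1)) * bq n m)
    1 n (by omega) ?_
  · beta_reduce at this
    rw [this, eqq_top hn]; push_cast; ring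
  · intro k hk hkn
    beta_reduce
    have h1 := habs1 hn (show 1 ≤ k by omega) (n := n)
    have h2 := habs2 hn (show 1 ≤ k by omega) (n := n)
    push_cast
    linear_combination (2*(2*(n:ℚ)-1)*((k:ℚ)-1)) * h1 - (2*(2*(n:ℚ)-1)*(k:ℚ)) * h2


/-! ### value lemmas -/

lemma half_range (hn : 1 ≤ n) (f : ℕ → ℕ) (hsym : ∀ j, j ≤ 2*n-1 → f (2*n-1-j) = f j) :
    ∑ j ∈ range (2 * n), f j = 2 * ∑ j ∈ Ico n (2 * n), f j := by
  have hsplit : ∑ j ∈ Ico 0 n, f j + ∑ j ∈ Ico n (2*n), f j = ∑ j ∈ Ico 0 (2*n), f j :=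
    Finset.sum_Ico_consecutive f (by omega) (by omega)
  have hhalf : ∑ j ∈ Ico 0 n, f j = ∑ j ∈ Ico n (2*n), f j := by
    apply Finset.sum_nbij' (fun j => 2*n-1-j) (fun j => 2*n-1-j)
    · intro a ha; simp only [Finset.mem_Ico] at *; omega
    · intro a ha; simp only [Finset.mem_Ico] at *; omega
    · intro a ha; simp only [Finset.mem_Ico] at ha; omega
    · intro a ha; simp only [Finset.mem_Ico] at ha; omega
    · intro a ha; simp only [Finset.mem_Ico] at ha
      rw [hsym a (by omega)]
  rw [Finset.range_eq_Ico, ← hsplit, hhalf]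
  ring

lemma reindex_b (hn : 1 ≤ n) (f : ℕ → ℚ) :
    ∑ j ∈ Ico n (2 * n), f j = ∑ m ∈ Icc 1 n, f (n + m - 1) := by
  apply Finset.sum_nbij' (fun j => j + 1 - n) (fun m => n + m - 1)
  · intro a ha; simp only [Finset.mem_Ico, Finset.mem_Icc] at *; omega
  · intro a ha; simp only [Finset.mem_Ico, Finset.mem_Icc] at *; omega
  · intro a ha; simp only [Finset.mem_Ico] at ha; omega
  · intro a ha; simp only [Finset.mem_Icc] at ha; omega
  · intro a ha; simp only [Finset.mem_Ico] at ha
    congr 1; omega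

lemma hSb (hn : 1 ≤ n) : 4 * ∑ m ∈ Icc 1 n, bq n m = (2 : ℚ) ^ (2 * n) := by
  have h0 : ∑ j ∈ range (2 * n), (2*n-1).choose j = 2 ^ (2*n-1) := by
    have := Nat.sum_range_choose (2*n-1)
    rwa [show 2*n-1+1 = 2*n by omega] at this
  have h1 := half_range hn (fun j => (2*n-1).choose j)
    (fun j hj => by beta_reduce; exact Nat.choose_symm hj)
  beta_reduce at h1
  rw [h1] at h0
  have h2 : ∑ m ∈ Icc 1 n, bq n m
      = ((∑ j ∈ Ico n (2*n), (2*n-1).choose j : ℕ) : ℚ) := by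
    push_cast
    rw [reindex_b hn (fun j => ((2*n-1).choose j : ℚ))]
    rfl
  rw [h2]
  have h0q : (2:ℚ) * ((∑ j ∈ Ico n (2*n), (2*n-1).choose j : ℕ) : ℚ) = (2:ℚ)^(2*n-1) := by
    exact_mod_cast h0
  rw [show (2:ℚ)^(2*n) = 2^(2*n-1) * 2 by rw [← pow_succ]; congr 1; omega]
  linarith

lemma hSb2 (hn : 1 ≤ n) :
    2 * ∑ m ∈ Icc 1 n, bq n m ^ 2 = (((4*n-2).choose (2*n-1) : ℕ) : ℚ) := by
  have hV : ∑ j ∈ range (2 * n), ((2*n-1).choose j)^2 = (4*n-2).choose (2*n-1) := by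
    have h := Nat.add_choose_eq (2*n-1) (2*n-1) (2*n-1)
    rw [show (2*n-1) + (2*n-1) = 4*n-2 by omega] at h
    rw [h, Finset.Nat.sum_antidiagonal_eq_sum_range_succ_mk]
    rw [show (2*n-1).succ = 2*n by omega]
    apply Finset.sum_congr rfl
    intro k hk
    simp only [Finset.mem_range] at hk
    rw [Nat.choose_symm (show k ≤ 2*n-1 by omega)]
    ring
  have h1 := half_range hn (fun j => ((2*n-1).choose j)^2)
    (fun j hj => by beta_reduce; rw [Nat.choose_symm hj])
  beta_reduce at h1
  rw [h1] at hV
  have h2 : ∑ m ∈ Icc 1 n, bq n m ^ 2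
      = ((∑ j ∈ Ico n (2*n), ((2*n-1).choose j)^2 : ℕ) : ℚ) := by
    push_cast
    rw [reindex_b hn (fun j => ((2*n-1).choose j : ℚ)^2)]
    rfl
  rw [h2]
  exact_mod_cast hV


/-! ### double sum helpers -/

lemma icc_filter (m : ℕ) (hm : 1 ≤ m) :
    (Icc 1 n).filter (fun i => m ≤ i) = Icc m n := by
  ext i
  simp only [Finset.mem_filter, Finset.mem_Icc]
  omega

lemma inner_as_ite (K : ℕ → ℚ) (m : ℕ) (hm : 1 ≤ m) :
    ∑ i ∈ Icc m n, K i = ∑ i ∈ Icc 1 n, if m ≤ i then K i else 0 := by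
  rw [← Finset.sum_filter, icc_filter m hm]

lemma sum_tri (K : ℕ → ℕ → ℚ) :
    (∑ m ∈ Icc 1 n, ∑ i ∈ Icc m n, K m i) + (∑ m ∈ Icc 1 n, ∑ i ∈ Icc m n, K i m)
      = (∑ m ∈ Icc 1 n, ∑ i ∈ Icc 1 n, K m i) + ∑ m ∈ Icc 1 n, K m m := by
  have e1 : ∑ m ∈ Icc 1 n, ∑ i ∈ Icc m n, K m i
      = ∑ m ∈ Icc 1 n, ∑ i ∈ Icc 1 n, (if m ≤ i then K m i else 0) := by
    apply Finset.sum_congr rfl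
    intro m hm
    simp only [Finset.mem_Icc] at hm
    exact inner_as_ite (fun i => K m i) m hm.1
  have e2 : ∑ m ∈ Icc 1 n, ∑ i ∈ Icc m n, K i m
      = ∑ m ∈ Icc 1 n, ∑ i ∈ Icc 1 n, (if i ≤ m then K m i else 0) := by
    rw [show (∑ m ∈ Icc 1 n, ∑ i ∈ Icc 1 n, (if i ≤ m then K m i else 0))
        = ∑ i ∈ Icc 1 n, ∑ m ∈ Icc 1 n, (if i ≤ m then K m i else 0) from Finset.sum_comm]
    apply Finset.sum_congr rfl
    intro m hm
    simp only [Finset.mem_Icc] at hm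
    rw [inner_as_ite (fun i => K i m) m hm.1]
  rw [e1, e2, ← Finset.sum_add_distrib]
  have e3 : ∀ m ∈ Icc 1 n,
      ((∑ i ∈ Icc 1 n, (if m ≤ i then K m i else 0)) + ∑ i ∈ Icc 1 n, (if i ≤ m then K m i else 0))
        = ∑ i ∈ Icc 1 n, (K m i + if i = m then K m i else 0) := by
    intro m hm
    rw [← Finset.sum_add_distrib]
    apply Finset.sum_congr rfl
    intro i hi
    rcases lt_trichotomy m i with h | h | h
    · simp [le_of_lt h, not_le.mpr h, h.ne']
    · subst h; simp
    · simp [le_of_lt h, not_le.mpr h, h.ne]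
  rw [Finset.sum_congr rfl e3]
  have e4 : ∀ m ∈ Icc 1 n,
      (∑ i ∈ Icc 1 n, (K m i + if i = m then K m i else 0))
        = (∑ i ∈ Icc 1 n, K m i) + K m m := by
    intro m hm
    rw [Finset.sum_add_distrib, Finset.sum_ite_eq' (Icc 1 n) m (fun i => K m i), if_pos hm]
  rw [Finset.sum_congr rfl e4, Finset.sum_add_distrib]

lemma min_split (F : ℕ → ℕ → ℚ) :
    ∑ i ∈ Icc 1 n, ∑ j ∈ Icc 1 n, F i j * (min i j : ℚ)
      = ∑ m ∈ Icc 1 n, ∑ i ∈ Icc m n, ∑ j ∈ Icc m n, F i j := by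
  have e1 : ∀ m ∈ Icc 1 n, (∑ i ∈ Icc m n, ∑ j ∈ Icc m n, F i j)
      = ∑ i ∈ Icc 1 n, ∑ j ∈ Icc 1 n, (if m ≤ i then if m ≤ j then F i j else 0 else 0) := by
    intro m hm
    simp only [Finset.mem_Icc] at hm
    rw [inner_as_ite (fun i => ∑ j ∈ Icc m n, F i j) m hm.1]
    apply Finset.sum_congr rfl
    intro i _
    by_cases h : m ≤ i
    · simp only [if_pos h]
      exact inner_as_ite (fun j => F i j) m hm.1
    · simp [h]
  rw [Finset.sum_congr rfl e1]
  rw [show (∑ m ∈ Icc 1 n, ∑ i ∈ Icc 1 n, ∑ j ∈ Icc 1 n,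
        (if m ≤ i then if m ≤ j then F i j else 0 else 0))
      = ∑ i ∈ Icc 1 n, ∑ m ∈ Icc 1 n, ∑ j ∈ Icc 1 n,
        (if m ≤ i then if m ≤ j then F i j else 0 else 0) from Finset.sum_comm]
  apply Finset.sum_congr rfl
  intro i hi
  rw [show (∑ m ∈ Icc 1 n, ∑ j ∈ Icc 1 n,
        (if m ≤ i then if m ≤ j then F i j else 0 else 0))
      = ∑ j ∈ Icc 1 n, ∑ m ∈ Icc 1 n,
        (if m ≤ i then if m ≤ j then F i j else 0 else 0) from Finset.sum_comm]
  apply Finset.sum_congr rfl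
  intro j hj
  simp only [Finset.mem_Icc] at hi hj
  have e2 : ∀ m, (if m ≤ i then if m ≤ j then F i j else 0 else 0)
      = if m ≤ min i j then F i j else 0 := by
    intro m
    rcases le_total i j with h | h
    · rw [min_eq_left h]
      by_cases h1 : m ≤ i
      · simp [h1, le_trans h1 h]
      · simp [h1]
    · rw [min_eq_right h]
      by_cases h1 : m ≤ j
      · simp [h1, le_trans h1 h]
      · simp [h1]
  rw [Finset.sum_congr rfl (fun m _ => e2 m)]
  rw [← Finset.sum_filter]
  have e3 : (Icc 1 n).filter (fun m => m ≤ min i j) = Icc 1 (min i j) := by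
    ext m
    simp only [Finset.mem_filter, Finset.mem_Icc, le_min_iff]
    omega
  rw [e3, Finset.sum_const, Nat.card_Icc]
  simp only [nsmul_eq_mul]
  push_cast [Nat.cast_min]
  ring_nf


/-! ### named sums -/

def SS (n : ℕ) : ℚ := ∑ i ∈ Icc 1 n, ∑ j ∈ Icc 1 n,
  cq n i * cq n j * |(i : ℚ)^2 * (j : ℚ)^2 * ((i:ℚ)^2 - (j:ℚ)^2)|
def M2 (n : ℕ) : ℚ := ∑ k ∈ Icc 1 n, (k:ℚ)^2 * cq n k
def M3 (n : ℕ) : ℚ := ∑ k ∈ Icc 1 n, (k:ℚ)^3 * cq n k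
def M4 (n : ℕ) : ℚ := ∑ k ∈ Icc 1 n, (k:ℚ)^4 * cq n k
def Sb (n : ℕ) : ℚ := ∑ m ∈ Icc 1 n, bq n m
def Sib (n : ℕ) : ℚ := ∑ m ∈ Icc 1 n, (m:ℚ) * bq n m
def Si2b (n : ℕ) : ℚ := ∑ m ∈ Icc 1 n, (m:ℚ)^2 * bq n m
def Sb2 (n : ℕ) : ℚ := ∑ m ∈ Icc 1 n, bq n m ^ 2
def Smb2 (n : ℕ) : ℚ := ∑ m ∈ Icc 1 n, (m:ℚ) * bq n m ^ 2
def Sm2b2 (n : ℕ) : ℚ := ∑ m ∈ Icc 1 n, (m:ℚ)^2 * bq n m ^ 2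
def Sm3b2 (n : ℕ) : ℚ := ∑ m ∈ Icc 1 n, (m:ℚ)^3 * bq n m ^ 2
def Se (n : ℕ) : ℚ := ∑ m ∈ Icc 1 n, eqq n m
def Rr (n m : ℕ) : ℚ := ∑ k ∈ Icc m n, bq n k
def Bmin (n : ℕ) : ℚ := ∑ i ∈ Icc 1 n, ∑ j ∈ Icc 1 n,
  (cq n i * cq n j * ((i:ℚ)^3*(j:ℚ)^2 + (i:ℚ)^2*(j:ℚ)^3)) * (min i j : ℚ)
def U1 (n : ℕ) : ℚ := ∑ m ∈ Icc 1 n,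
  ((m:ℚ)^2 - m + n) * bq n m * Rr n m
def Xd (n : ℕ) : ℚ := ∑ m ∈ Icc 1 n, ∑ i ∈ Icc m n,
  (((i:ℚ)^2 - i) - ((m:ℚ)^2 - m)) * (bq n m * bq n i)

/-- generic linear expansion of a sum -/
lemma sum_lin {s : Finset ℕ} (u v w x : ℚ) (f0 f1 f2 f3 F : ℕ → ℚ)
    (h : ∀ m ∈ s, F m = u * f0 m + v * f1 m + w * f2 m + x * f3 m) :
    ∑ m ∈ s, F m = u * (∑ m ∈ s, f0 m) + v * (∑ m ∈ s, f1 m)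
      + w * (∑ m ∈ s, f2 m) + x * (∑ m ∈ s, f3 m) := by
  rw [Finset.sum_congr rfl h, Finset.sum_add_distrib, Finset.sum_add_distrib,
    Finset.sum_add_distrib, ← Finset.mul_sum, ← Finset.mul_sum, ← Finset.mul_sum,
    ← Finset.mul_sum]

/-! ### step A : kernel split -/

lemma kern (i j : ℕ) :
    cq n i * cq n j * |(i : ℚ)^2 * (j : ℚ)^2 * ((i:ℚ)^2 - (j:ℚ)^2)|
      = (((i:ℚ)^4 * cq n i) * ((j:ℚ)^2 * cq n j)
          + 2 * (((i:ℚ)^3 * cq n i) * ((j:ℚ)^3 * cq n j))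
          + ((i:ℚ)^2 * cq n i) * ((j:ℚ)^4 * cq n j))
        - 2 * ((cq n i * cq n j * ((i:ℚ)^3*(j:ℚ)^2 + (i:ℚ)^2*(j:ℚ)^3)) * (min i j : ℚ)) := by
  rcases le_total i j with h | h
  · have hq : (i:ℚ) ≤ j := by exact_mod_cast h
    have habs : |(i : ℚ)^2 * (j : ℚ)^2 * ((i:ℚ)^2 - (j:ℚ)^2)|
        = -((i : ℚ)^2 * (j : ℚ)^2 * ((i:ℚ)^2 - (j:ℚ)^2)) := by
      apply abs_of_nonpos
      have h1 : (0:ℚ) ≤ (i:ℚ)^2 * (j:ℚ)^2 := by positivity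
      have h2 : (i:ℚ)^2 - (j:ℚ)^2 ≤ 0 := by nlinarith [Nat.cast_nonneg (α := ℚ) i]
      exact mul_nonpos_of_nonneg_of_nonpos h1 h2
    rw [habs, min_eq_left hq]
    ring
  · have hq : (j:ℚ) ≤ i := by exact_mod_cast h
    have habs : |(i : ℚ)^2 * (j : ℚ)^2 * ((i:ℚ)^2 - (j:ℚ)^2)|
        = (i : ℚ)^2 * (j : ℚ)^2 * ((i:ℚ)^2 - (j:ℚ)^2) := by
      apply abs_of_nonneg
      have h1 : (0:ℚ) ≤ (i:ℚ)^2 * (j:ℚ)^2 := by positivity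
      have h2 : (0:ℚ) ≤ (i:ℚ)^2 - (j:ℚ)^2 := by nlinarith [Nat.cast_nonneg (α := ℚ) j]
      exact mul_nonneg h1 h2
    rw [habs, min_eq_right hq]
    ring

lemma stepA : SS n = 2 * M4 n * M2 n + 2 * (M3 n)^2 - 2 * Bmin n := by
  unfold SS Bmin M2 M3 M4
  rw [Finset.sum_congr rfl (fun i _ => Finset.sum_congr rfl (fun j _ => kern i j))]
  simp only [Finset.sum_sub_distrib, Finset.sum_add_distrib, ← Finset.mul_sum,
    ← Finset.sum_mul]
  ring

/-! ### step B : min part via tails -/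

lemma stepB (hn : 1 ≤ n) : Bmin n
    = 2*(n:ℚ)^2 * (Sm3b2 n - 2*Sm2b2 n + ((n:ℚ)+1)*Smb2 n - n*Sb2 n) + 2*(n:ℚ)^2 * U1 n := by
  unfold Bmin
  rw [min_split (F := fun i j => cq n i * cq n j * ((i:ℚ)^3*(j:ℚ)^2 + (i:ℚ)^2*(j:ℚ)^3))]
  have hinner : ∀ m ∈ Icc 1 n,
      (∑ i ∈ Icc m n, ∑ j ∈ Icc m n,
        cq n i * cq n j * ((i:ℚ)^3*(j:ℚ)^2 + (i:ℚ)^2*(j:ℚ)^3))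
      = 2 * ((n:ℚ) * ((m:ℚ)^2 - m + n) * bq n m)
          * ((n:ℚ) * ((m:ℚ) - 1) * bq n m + n * Rr n m) := by
    intro m hm
    simp only [Finset.mem_Icc] at hm
    have e1 : ∀ i ∈ Icc m n, (∑ j ∈ Icc m n,
        cq n i * cq n j * ((i:ℚ)^3*(j:ℚ)^2 + (i:ℚ)^2*(j:ℚ)^3))
        = ((i:ℚ)^3 * cq n i) * (∑ j ∈ Icc m n, (j:ℚ)^2 * cq n j)
          + ((i:ℚ)^2 * cq n i) * (∑ j ∈ Icc m n, (j:ℚ)^3 * cq n j) := by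
      intro i _
      rw [Finset.mul_sum, Finset.mul_sum, ← Finset.sum_add_distrib]
      exact Finset.sum_congr rfl (fun j _ => by ring)
    rw [Finset.sum_congr rfl e1, Finset.sum_add_distrib, ← Finset.sum_mul, ← Finset.sum_mul]
    rw [hG3 hn hm.1 (by omega), hG2 hn hm.1 (by omega)]
    unfold Rr
    ring
  rw [Finset.sum_congr rfl hinner]
  have expand : ∀ m ∈ Icc 1 n,
      2 * ((n:ℚ) * ((m:ℚ)^2 - m + n) * bq n m)
          * ((n:ℚ) * ((m:ℚ) - 1) * bq n m + n * Rr n m)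
      = 2*(n:ℚ)^2 * ((m:ℚ)^3 * bq n m^2 - 2*((m:ℚ)^2 * bq n m^2)
            + ((n:ℚ)+1) * ((m:ℚ) * bq n m^2) - n * (bq n m^2))
        + 2*(n:ℚ)^2 * (((m:ℚ)^2 - m + n) * bq n m * Rr n m) := by
    intro m _
    ring
  rw [Finset.sum_congr rfl expand, Finset.sum_add_distrib, ← Finset.mul_sum, ← Finset.mul_sum]
  unfold U1
  congr 1
  rw [sum_lin 1 (-2) ((n:ℚ)+1) (-(n:ℚ))
    (fun m => (m:ℚ)^3 * bq n m^2) (fun m => (m:ℚ)^2 * bq n m^2)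
    (fun m => (m:ℚ) * bq n m^2) (fun m => bq n m^2)
    (fun m => (m:ℚ)^3 * bq n m^2 - 2*((m:ℚ)^2 * bq n m^2)
      + ((n:ℚ)+1) * ((m:ℚ) * bq n m^2) - n * (bq n m^2))
    (fun m _ => by ring)]
  unfold Sm3b2 Sm2b2 Smb2 Sb2
  ring


/-! ### step C : U1 symmetrization -/

lemma stepC (hn : 1 ≤ n) : 2 * U1 n
    = (Si2b n - Sib n + n * Sb n) * Sb n + (Sm2b2 n - Smb2 n + n * Sb2 n) - Xd n := by
  have tri := sum_tri (n := n) (fun m i => ((m:ℚ)^2 - m + n) * bq n m * bq n i)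
  have e1 : ∑ m ∈ Icc 1 n, ∑ i ∈ Icc m n, ((m:ℚ)^2 - m + n) * bq n m * bq n i = U1 n := by
    unfold U1 Rr
    exact Finset.sum_congr rfl (fun m _ => by rw [Finset.mul_sum])
  have e2 : Xd n = (∑ m ∈ Icc 1 n, ∑ i ∈ Icc m n, ((i:ℚ)^2 - i + n) * bq n i * bq n m)
      - ∑ m ∈ Icc 1 n, ∑ i ∈ Icc m n, ((m:ℚ)^2 - m + n) * bq n m * bq n i := by
    unfold Xd
    rw [← Finset.sum_sub_distrib]
    apply Finset.sum_congr rfl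
    intro m _
    rw [← Finset.sum_sub_distrib]
    exact Finset.sum_congr rfl (fun i _ => by ring)
  have e3 : ∑ m ∈ Icc 1 n, ∑ i ∈ Icc 1 n, ((m:ℚ)^2 - m + n) * bq n m * bq n i
      = (Si2b n - Sib n + n * Sb n) * Sb n := by
    have inner : ∀ m ∈ Icc 1 n, (∑ i ∈ Icc 1 n, ((m:ℚ)^2 - m + n) * bq n m * bq n i)
        = (((m:ℚ)^2 - m + n) * bq n m) * Sb n := by
      intro m _
      unfold Sb
      rw [Finset.mul_sum]
    rw [Finset.sum_congr rfl inner, ← Finset.sum_mul]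
    congr 1
    rw [sum_lin 1 (-1) (n:ℚ) 0 (fun m => (m:ℚ)^2 * bq n m) (fun m => (m:ℚ) * bq n m)
      (fun m => bq n m) (fun _ => 0) _ (fun m _ => by ring)]
    unfold Si2b Sib Sb
    ring
  have e4 : ∑ m ∈ Icc 1 n, ((m:ℚ)^2 - m + n) * bq n m * bq n m
      = Sm2b2 n - Smb2 n + n * Sb2 n := by
    rw [sum_lin 1 (-1) (n:ℚ) 0 (fun m => (m:ℚ)^2 * bq n m ^ 2) (fun m => (m:ℚ) * bq n m ^ 2)
      (fun m => bq n m ^ 2) (fun _ => 0) _ (fun m _ => by ring)]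
    unfold Sm2b2 Smb2 Sb2
    ring
  rw [e1] at tri
  linear_combination tri + e2 + e3 + e4 - e1

/-! ### step D : Xd evaluation -/

lemma stepD (hn : 1 ≤ n) :
    Xd n = Si2b n * Sb n + (Sib n)^2 - Sib n * Sb n - (2*(n:ℚ) - 1) * (Se n)^2 := by
  -- K' m i := ((m:ℚ)+i-1) * (((m:ℚ)+i) - 2*((m:ℚ) ⊓ (i:ℚ))) * (bq n m * bq n i)
  have hD1 : Xd n = ∑ m ∈ Icc 1 n, ∑ i ∈ Icc m n,
      ((m:ℚ)+i-1) * (((m:ℚ)+i) - 2*((m:ℚ) ⊓ (i:ℚ))) * (bq n m * bq n i) := by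
    unfold Xd
    apply Finset.sum_congr rfl
    intro m hm
    apply Finset.sum_congr rfl
    intro i hi
    simp only [Finset.mem_Icc] at hi
    have : ((m:ℚ) ⊓ (i:ℚ)) = (m:ℚ) := min_eq_left (by exact_mod_cast hi.1)
    rw [this]
    ring
  have tri := sum_tri (n := n)
    (fun m i => ((m:ℚ)+i-1) * (((m:ℚ)+i) - 2*((m:ℚ) ⊓ (i:ℚ))) * (bq n m * bq n i))
  have hsymm : ∑ m ∈ Icc 1 n, ∑ i ∈ Icc m n,
      ((i:ℚ)+m-1) * (((i:ℚ)+m) - 2*((i:ℚ) ⊓ (m:ℚ))) * (bq n i * bq n m)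
      = ∑ m ∈ Icc 1 n, ∑ i ∈ Icc m n,
      ((m:ℚ)+i-1) * (((m:ℚ)+i) - 2*((m:ℚ) ⊓ (i:ℚ))) * (bq n m * bq n i) := by
    apply Finset.sum_congr rfl; intro m _
    apply Finset.sum_congr rfl; intro i _
    rw [min_comm]
    ring
  have hdiag : ∑ m ∈ Icc 1 n,
      ((m:ℚ)+m-1) * (((m:ℚ)+m) - 2*((m:ℚ) ⊓ (m:ℚ))) * (bq n m * bq n m) = 0 := by
    apply Finset.sum_eq_zero
    intro m _
    rw [min_self]
    ring
  rw [hsymm, hdiag] at tri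
  -- tri : 2 * (Σ K') = full + 0
  have hfull : ∑ m ∈ Icc 1 n, ∑ i ∈ Icc 1 n,
      ((m:ℚ)+i-1) * (((m:ℚ)+i) - 2*((m:ℚ) ⊓ (i:ℚ))) * (bq n m * bq n i)
      = (∑ m ∈ Icc 1 n, ∑ i ∈ Icc 1 n, ((m:ℚ)+i-1) * ((m:ℚ)+i) * (bq n m * bq n i))
        - 2 * ∑ m ∈ Icc 1 n, ∑ i ∈ Icc 1 n,
            (((m:ℚ)+i-1) * (bq n m * bq n i)) * ((m:ℚ) ⊓ (i:ℚ)) := by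
    rw [Finset.mul_sum, ← Finset.sum_sub_distrib]
    apply Finset.sum_congr rfl; intro m _
    rw [Finset.mul_sum, ← Finset.sum_sub_distrib]
    exact Finset.sum_congr rfl (fun i _ => by ring)
  have hpart1 : ∑ m ∈ Icc 1 n, ∑ i ∈ Icc 1 n, ((m:ℚ)+i-1) * ((m:ℚ)+i) * (bq n m * bq n i)
      = 2 * Si2b n * Sb n + 2 * (Sib n)^2 - 2 * Sib n * Sb n := by
    have inner : ∀ m ∈ Icc 1 n, (∑ i ∈ Icc 1 n, ((m:ℚ)+i-1) * ((m:ℚ)+i) * (bq n m * bq n i))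
        = (((m:ℚ)^2 - m) * bq n m) * Sb n + ((2*(m:ℚ)-1) * bq n m) * Sib n
          + bq n m * Si2b n := by
      intro m _
      rw [sum_lin (((m:ℚ)^2 - m) * bq n m) ((2*(m:ℚ)-1) * bq n m) (bq n m) 0
        (fun i => bq n i) (fun i => (i:ℚ) * bq n i) (fun i => (i:ℚ)^2 * bq n i) (fun _ => 0)
        _ (fun i _ => by ring)]
      unfold Sb Sib Si2b
      ring
    rw [Finset.sum_congr rfl inner]
    rw [sum_lin (Sb n) (Sib n) (Si2b n) 0
      (fun m => ((m:ℚ)^2 - m) * bq n m) (fun m => (2*(m:ℚ)-1) * bq n m) (fun m => bq n m)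
      (fun _ => 0) _ (fun m _ => by ring)]
    rw [sum_lin 1 (-1) 0 0 (fun m => (m:ℚ)^2 * bq n m) (fun m => (m:ℚ) * bq n m)
      (fun _ => 0) (fun _ => 0) (fun m => ((m:ℚ)^2 - m) * bq n m) (fun m _ => by ring)]
    rw [sum_lin 2 (-1) 0 0 (fun m => (m:ℚ) * bq n m) (fun m => bq n m)
      (fun _ => 0) (fun _ => 0) (fun m => (2*(m:ℚ)-1) * bq n m) (fun m _ => by ring)]
    unfold Si2b Sib Sb
    ring
  have hpart2 : ∑ m ∈ Icc 1 n, ∑ i ∈ Icc 1 n,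
      (((m:ℚ)+i-1) * (bq n m * bq n i)) * ((m:ℚ) ⊓ (i:ℚ))
      = (2*(n:ℚ) - 1) * (Se n)^2 := by
    rw [min_split (F := fun m i => ((m:ℚ)+i-1) * (bq n m * bq n i))]
    have perk : ∀ k ∈ Icc 1 n, (∑ m ∈ Icc k n, ∑ i ∈ Icc k n,
        ((m:ℚ)+i-1) * (bq n m * bq n i))
        = (2*(n:ℚ) - 1) * (eqq n k * Rr n k) := by
      intro k hk
      simp only [Finset.mem_Icc] at hk
      have inner : ∀ m ∈ Icc k n, (∑ i ∈ Icc k n, ((m:ℚ)+i-1) * (bq n m * bq n i))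
          = (((m:ℚ) - 1) * bq n m) * Rr n k + bq n m * (∑ i ∈ Icc k n, (i:ℚ) * bq n i) := by
        intro m _
        rw [sum_lin (((m:ℚ) - 1) * bq n m) (bq n m) 0 0
          (fun i => bq n i) (fun i => (i:ℚ) * bq n i) (fun _ => 0) (fun _ => 0)
          _ (fun i _ => by ring)]
        unfold Rr
        ring
      rw [Finset.sum_congr rfl inner, Finset.sum_add_distrib]
      rw [sum_lin (Rr n k) (-(Rr n k)) 0 0
        (fun m => (m:ℚ) * bq n m) (fun m => bq n m) (fun _ => 0) (fun _ => 0)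
        _ (fun m _ => by ring)]
      rw [← Finset.sum_mul]
      have bridge : ∑ i ∈ Icc k n, (2*(i:ℚ) - 1) * bq n i
          = 2 * (∑ i ∈ Icc k n, (i:ℚ) * bq n i) - Rr n k := by
        rw [sum_lin 2 (-1) 0 0 (fun i => (i:ℚ) * bq n i) (fun i => bq n i)
          (fun _ => 0) (fun _ => 0) _ (fun i _ => by ring)]
        unfold Rr
        ring
      have hh := hH1 hn hk.1 (show k ≤ n + 1 by omega)
      rw [bridge] at hh
      unfold Rr at hh ⊢
      linear_combination (∑ k_1 ∈ Icc k n, bq n k_1) * hh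
    rw [Finset.sum_congr rfl perk, ← Finset.mul_sum]
    congr 1
    -- Σ_k e_k R_k = Se²
    have hre : ∀ k ∈ Icc 1 n, eqq n k * Rr n k
        = eqq n k * (2 * (∑ i ∈ Icc k n, eqq n i) - eqq n k) := by
      intro k hk
      simp only [Finset.mem_Icc] at hk
      have := hRE hn hk.1 (show k ≤ n + 1 by omega)
      unfold Rr
      rw [this]
    rw [Finset.sum_congr rfl hre]
    have tri2 := sum_tri (n := n) (fun k i => eqq n k * eqq n i)
    have t1 : ∀ k ∈ Icc 1 n, (∑ i ∈ Icc k n, eqq n k * eqq n i)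
        = eqq n k * (∑ i ∈ Icc k n, eqq n i) := fun k _ => by rw [Finset.mul_sum]
    have t2 : ∀ k ∈ Icc 1 n, (∑ i ∈ Icc k n, eqq n i * eqq n k)
        = eqq n k * (∑ i ∈ Icc k n, eqq n i) := fun k _ => by
      rw [← Finset.sum_mul]; ring
    rw [Finset.sum_congr rfl t1, Finset.sum_congr rfl t2] at tri2
    have t3 : ∑ k ∈ Icc 1 n, ∑ i ∈ Icc 1 n, eqq n k * eqq n i = Se n * Se n := by
      rw [← Finset.sum_mul_sum]
      rfl
    rw [t3] at tri2
    have expand : ∀ k ∈ Icc 1 n, eqq n k * (2 * (∑ i ∈ Icc k n, eqq n i) - eqq n k)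
        = 2 * (eqq n k * (∑ i ∈ Icc k n, eqq n i)) - eqq n k * eqq n k := fun k _ => by ring
    rw [Finset.sum_congr rfl expand, Finset.sum_sub_distrib, ← Finset.mul_sum]
    linear_combination tri2
  rw [hfull, hpart1, hpart2] at tri
  rw [hD1]
  linear_combination tri / 2


/-! ### values -/

lemma vM3 (hn : 1 ≤ n) : M3 n = (n:ℚ)^2 * bq n 1 := by
  have h := hG3 hn (le_refl 1) (by omega)
  unfold M3
  push_cast at h
  linear_combination h

lemma vM2 (hn : 1 ≤ n) : M2 n = (n:ℚ) * Sb n := by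
  have h := hG2 hn (le_refl 1) (by omega)
  unfold M2 Sb
  push_cast at h
  linear_combination h

lemma vM4 (hn : 1 ≤ n) : M4 n = (n:ℚ)*(3*(n:ℚ)-1) * Sb n / 2 := by
  have h := hG4 hn (le_refl 1) (by omega)
  have hsc := hScc hn (le_refl 1) (by omega)
  have hbr : ∑ k ∈ Icc 1 n, (4 * (k:ℚ)^4 - n*(3*n-1)) * cq n k
      = 4 * M4 n - (n:ℚ)*(3*n-1) * ∑ k ∈ Icc 1 n, cq n k := by
    rw [sum_lin 4 (-((n:ℚ)*(3*n-1))) 0 0 (fun k => (k:ℚ)^4 * cq n k) (fun k => cq n k)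
      (fun _ => 0) (fun _ => 0) (fun k => (4 * (k:ℚ)^4 - n*(3*n-1)) * cq n k)
      (fun k _ => by ring)]
    unfold M4
    ring
  rw [hbr, hsc] at h
  unfold Sb
  push_cast at h
  linear_combination h / 4

lemma vSib (hn : 1 ≤ n) : Sib n = ((2*(n:ℚ)-1) * eqq n 1 + Sb n) / 2 := by
  have h := hH1 hn (le_refl 1) (by omega)
  have hbr : ∑ i ∈ Icc 1 n, (2*(i:ℚ) - 1) * bq n i = 2 * Sib n - Sb n := by
    rw [sum_lin 2 (-1) 0 0 (fun i => (i:ℚ) * bq n i) (fun i => bq n i)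
      (fun _ => 0) (fun _ => 0) (fun i => (2*(i:ℚ) - 1) * bq n i) (fun i _ => by ring)]
    unfold Sib Sb
    ring
  rw [hbr] at h
  linear_combination h / 2

lemma vSi2b (hn : 1 ≤ n) : Si2b n = Sib n + ((n:ℚ)-1) * Sb n / 2 := by
  have h := hV8 hn
  have h2n1 : (2*(n:ℚ)-1) ≠ 0 := by
    have : (1:ℚ) ≤ (n:ℚ) := by exact_mod_cast hn
    intro hc; nlinarith
  have hbr : ∑ m ∈ Icc 1 n, (2 * (n:ℚ) - 1) * ((2 * (m:ℚ) - 1) ^ 2 - (2 * (n:ℚ) - 1)) * bq n m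
      = (2*(n:ℚ)-1) * (4 * Si2b n - 4 * Sib n + (2 - 2*(n:ℚ)) * Sb n) := by
    rw [sum_lin ((2*(n:ℚ)-1)*4) (-((2*(n:ℚ)-1)*4)) ((2*(n:ℚ)-1)*(2-2*(n:ℚ))) 0
      (fun m => (m:ℚ)^2 * bq n m) (fun m => (m:ℚ) * bq n m) (fun m => bq n m) (fun _ => 0)
      (fun m => (2 * (n:ℚ) - 1) * ((2 * (m:ℚ) - 1) ^ 2 - (2 * (n:ℚ) - 1)) * bq n m)
      (fun m _ => by ring)]
    unfold Si2b Sib Sb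
    ring
  rw [hbr] at h
  have h0 := mul_eq_zero.mp h
  rcases h0 with h0 | h0
  · exact absurd h0 h2n1
  · linarith

lemma vSmb2 (hn : 1 ≤ n) (h2n1 : (2*(n:ℚ)-1) ≠ 0) :
    Smb2 n = ((n:ℚ)^2 * (bq n 1)^2 / (2*(n:ℚ)-1) + Sb2 n) / 2 := by
  have h := hV10 hn
  have hbr : ∑ m ∈ Icc 1 n, (2 * (n:ℚ) - 1) * (2 * (m:ℚ) - 1) * bq n m ^ 2
      = (2*(n:ℚ)-1) * (2 * Smb2 n - Sb2 n) := by
    rw [sum_lin ((2*(n:ℚ)-1)*2) (-(2*(n:ℚ)-1)) 0 0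
      (fun m => (m:ℚ) * bq n m ^ 2) (fun m => bq n m ^ 2) (fun _ => 0) (fun _ => 0)
      (fun m => (2 * (n:ℚ) - 1) * (2 * (m:ℚ) - 1) * bq n m ^ 2) (fun m _ => by ring)]
    unfold Smb2 Sb2
    ring
  rw [hbr] at h
  rw [div_add' _ _ _ h2n1, div_div, eq_div_iff (mul_ne_zero h2n1 two_ne_zero)]
  linear_combination h

lemma vSm2b2 (hn : 1 ≤ n) (h4n3 : (4*(n:ℚ)-3) ≠ 0) :
    Sm2b2 n = Smb2 n - Sb2 n / 4 + (2*(n:ℚ)-1)^2 * Sb2 n / (4*(4*(n:ℚ)-3)) := by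
  have h := hV12 hn
  have hbr : ∑ m ∈ Icc 1 n,
      (2 * (4*(n:ℚ) - 3) * (2 * (m:ℚ) - 1) ^ 2 - 2 * (2*(n:ℚ)-1)^2) * bq n m ^ 2
      = 2*(4*(n:ℚ)-3) * (4 * Sm2b2 n - 4 * Smb2 n + Sb2 n) - 2*(2*(n:ℚ)-1)^2 * Sb2 n := by
    rw [sum_lin (2*(4*(n:ℚ)-3)*4) (-(2*(4*(n:ℚ)-3)*4)) (2*(4*(n:ℚ)-3) - 2*(2*(n:ℚ)-1)^2) 0
      (fun m => (m:ℚ)^2 * bq n m ^ 2) (fun m => (m:ℚ) * bq n m ^ 2) (fun m => bq n m ^ 2)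
      (fun _ => 0)
      (fun m => (2 * (4*(n:ℚ) - 3) * (2 * (m:ℚ) - 1) ^ 2 - 2 * (2*(n:ℚ)-1)^2) * bq n m ^ 2)
      (fun m _ => by ring)]
    unfold Sm2b2 Smb2 Sb2
    ring
  rw [hbr] at h
  field_simp
  linear_combination h / 2

lemma vSm3b2 (hn2 : 2 ≤ n) :
    Sm3b2 n = ((n:ℚ)^2 * (bq n 1)^2 + 12 * Sm2b2 n - 6 * Smb2 n + Sb2 n) / 8 := by
  have hn : 1 ≤ n := by omega
  have h := hV11 hn2
  have hcoef : ((n:ℚ)-1) * (2*(n:ℚ)-1) ≠ 0 := by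
    have : (2:ℚ) ≤ (n:ℚ) := by exact_mod_cast hn2
    intro hc
    rcases mul_eq_zero.mp hc with hc | hc <;> nlinarith
  have hbr : ∑ m ∈ Icc 1 n, ((n:ℚ) - 1) * (2 * n - 1) * (2 * (m:ℚ) - 1) ^ 3 * bq n m ^ 2
      = ((n:ℚ)-1)*(2*(n:ℚ)-1) * (8 * Sm3b2 n - 12 * Sm2b2 n + 6 * Smb2 n - Sb2 n) := by
    rw [sum_lin (((n:ℚ)-1)*(2*(n:ℚ)-1)*8) (-(((n:ℚ)-1)*(2*(n:ℚ)-1)*12))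
      (((n:ℚ)-1)*(2*(n:ℚ)-1)*6) (-(((n:ℚ)-1)*(2*(n:ℚ)-1)))
      (fun m => (m:ℚ)^3 * bq n m ^ 2) (fun m => (m:ℚ)^2 * bq n m ^ 2)
      (fun m => (m:ℚ) * bq n m ^ 2) (fun m => bq n m ^ 2)
      (fun m => ((n:ℚ) - 1) * (2 * n - 1) * (2 * (m:ℚ) - 1) ^ 3 * bq n m ^ 2)
      (fun m _ => by ring)]
    unfold Sm3b2 Sm2b2 Smb2 Sb2
    ring
  rw [hbr] at h
  have h' : 8 * Sm3b2 n - 12 * Sm2b2 n + 6 * Smb2 n - Sb2 n = (n:ℚ)^2 * (bq n 1)^2 := by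
    have := mul_left_cancel₀ hcoef (by linear_combination h :
      ((n:ℚ)-1)*(2*(n:ℚ)-1) * (8 * Sm3b2 n - 12 * Sm2b2 n + 6 * Smb2 n - Sb2 n)
        = ((n:ℚ)-1)*(2*(n:ℚ)-1) * ((n:ℚ)^2 * (bq n 1)^2))
    exact this
  linarith

lemma vSe (hn : 1 ≤ n) : Se n = (Sb n + eqq n 1) / 2 := by
  have h := hRE hn (le_refl 1) (by omega)
  unfold Sb Se
  linarith [h]

lemma vDq (hn : 1 ≤ n) (h2n1 : (2*(n:ℚ)-1) ≠ 0) :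
    eqq n 1 = (n:ℚ) * bq n 1 / (2*(n:ℚ)-1) := by
  have h := habs1 hn (le_refl 1) (n := n)
  push_cast at h
  rw [eq_div_iff h2n1]
  linear_combination -h

/-! ### core identity -/

theorem core (hn2 : 2 ≤ n) :
    (2*(n:ℚ)-1) * SS n = 2 * (n:ℚ)^4 * ((n:ℚ)-1) * (bq n 1)^2 := by
  have hn : 1 ≤ n := by omega
  have hnq : (2:ℚ) ≤ (n:ℚ) := by exact_mod_cast hn2
  have h2n1 : (2*(n:ℚ)-1) ≠ 0 := by intro hc; nlinarith
  have h4n3 : (4*(n:ℚ)-3) ≠ 0 := by intro hc; nlinarith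
  have hSS : SS n = 2 * M4 n * M2 n + 2 * (M3 n)^2
      - 4*(n:ℚ)^2 * (Sm3b2 n - 2*Sm2b2 n + ((n:ℚ)+1)*Smb2 n - n*Sb2 n)
      - 2*(n:ℚ)^2 * ((Si2b n - Sib n + n * Sb n) * Sb n + (Sm2b2 n - Smb2 n + n * Sb2 n)
          - (Si2b n * Sb n + (Sib n)^2 - Sib n * Sb n - (2*(n:ℚ) - 1) * (Se n)^2)) := by
    linear_combination (stepA (n := n)) - 2 * (stepB hn) - 2*(n:ℚ)^2 * (stepC hn)
      + 2*(n:ℚ)^2 * (stepD hn)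
  rw [hSS, vM4 hn, vM2 hn, vM3 hn, vSm3b2 hn2, vSm2b2 hn h4n3, vSmb2 hn h2n1,
    vSi2b hn, vSib hn, vSe hn, vDq hn h2n1]
  have hb2v := hSb2 hn
  have hbv := hSb hn
  unfold Sb2 Sb
  rw [show (∑ m ∈ Icc 1 n, bq n m) = (2:ℚ)^(2*n) / 4 by linarith [hbv],
    show (∑ m ∈ Icc 1 n, bq n m ^ 2) = (((4*n-2).choose (2*n-1) : ℕ) : ℚ) / 2 by
      linarith [hb2v]]
  field_simp
  ring

/-! ### integer-level reduction -/

lemma ich_nat (i : ℕ) : ((ichoose (2*n) ((n:ℤ)+(i:ℤ))) : ℚ) = cq n i := by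
  unfold ichoose cq
  rw [if_pos (by omega : (0:ℤ) ≤ (n:ℤ)+(i:ℤ))]
  rw [show ((n:ℤ)+(i:ℤ)).toNat = n + i by omega]
  push_cast
  ring

lemma ich_zero {i : ℤ} (h : i ∉ Icc (-(n:ℤ)) (n:ℤ)) : ichoose (2*n) ((n:ℤ)+i) = 0 := by
  simp only [Finset.mem_Icc, not_and_or, not_le] at h
  unfold ichoose
  rcases h with h | h
  · rw [if_neg (by omega)]
  · rw [if_pos (by omega)]
    rw [Nat.choose_eq_zero_of_lt (by omega)]
    simp

lemma ich_even (i : ℤ) : ichoose (2*n) ((n:ℤ)+(-i)) = ichoose (2*n) ((n:ℤ)+i) := by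
  by_cases h : i ∈ Icc (-(n:ℤ)) (n:ℤ)
  · simp only [Finset.mem_Icc] at h
    unfold ichoose
    rw [if_pos (by omega), if_pos (by omega)]
    have hle : ((n:ℤ)+i).toNat ≤ 2*n := by omega
    have hcs := Nat.choose_symm (n := 2*n) (k := ((n:ℤ)+i).toNat) hle
    rw [show ((n:ℤ)+(-i)).toNat = 2*n - ((n:ℤ)+i).toNat by omega, hcs]
  · rw [ich_zero h, ich_zero (by simp only [Finset.mem_Icc] at h ⊢; omega)]

lemma fold (G : ℤ → ℚ) (hev : ∀ i : ℤ, G (-i) = G i) (h0 : G 0 = 0) :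
    ∑ i ∈ Icc (-(n:ℤ)) (n:ℤ), G i = 2 * ∑ i ∈ Icc 1 n, G (i:ℤ) := by
  have hsplit : Icc (-(n:ℤ)) (n:ℤ) = Icc (-(n:ℤ)) (-1) ∪ Icc 0 (n:ℤ) := by
    ext x
    simp only [Finset.mem_Icc, Finset.mem_union]
    omega
  have hdisj : Disjoint (Icc (-(n:ℤ)) (-1)) (Icc 0 (n:ℤ)) := by
    simp only [Finset.disjoint_left, Finset.mem_Icc]
    intro a ha hb
    omega
  rw [hsplit, Finset.sum_union hdisj]
  have hneg : ∑ i ∈ Icc (-(n:ℤ)) (-1), G i = ∑ i ∈ Icc 1 n, G (i:ℤ) := by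
    exact Finset.sum_nbij' (fun x => (-x).toNat) (fun i => -(i:ℤ))
      (fun a ha => by simp only [Finset.mem_Icc] at *; omega)
      (fun a ha => by simp only [Finset.mem_Icc] at *; omega)
      (fun a ha => by beta_reduce; simp only [Finset.mem_Icc] at ha; omega)
      (fun a ha => by beta_reduce; simp only [Finset.mem_Icc] at ha; omega)
      (fun a ha => by
        simp only [Finset.mem_Icc] at ha
        beta_reduce
        rw [show (((-a).toNat : ℤ)) = -a by omega, hev])
  have hpos : ∑ i ∈ Icc (0:ℤ) (n:ℤ), G i = G 0 + ∑ i ∈ Icc 1 n, G (i:ℤ) := by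
    have e : Icc (0:ℤ) (n:ℤ) = insert 0 (Icc 1 (n:ℤ)) := by
      ext x
      simp only [Finset.mem_Icc, Finset.mem_insert]
      omega
    rw [e, Finset.sum_insert (by simp)]
    congr 1
    exact Finset.sum_nbij' (fun x => x.toNat) (fun i => (i:ℤ))
      (fun a ha => by simp only [Finset.mem_Icc] at *; omega)
      (fun a ha => by simp only [Finset.mem_Icc] at *; omega)
      (fun a ha => by beta_reduce; simp only [Finset.mem_Icc] at ha; omega)
      (fun a ha => by beta_reduce; simp only [Finset.mem_Icc] at ha; omega)
      (fun a ha => by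
        simp only [Finset.mem_Icc] at ha
        beta_reduce
        rw [show ((a.toNat : ℤ)) = a by omega])
  rw [hneg, hpos, h0]
  ring

end Stmt18

open Stmt18 in
theorem stmt18 (n : ℕ) (hn : 1 ≤ n) :
    ∑ᶠ i : ℤ, ∑ᶠ j : ℤ,
        ((ichoose (2 * n) (n + i) : ℚ) * (ichoose (2 * n) (n + j) : ℚ)
          * |(i : ℚ) ^ 2 * (j : ℚ) ^ 2 * ((i : ℚ) ^ 2 - (j : ℚ) ^ 2)|)
      = 2 * (n : ℚ) ^ 4 * ((n : ℚ) - 1) / (2 * n - 1) * ((2 * n).choose n : ℚ) ^ 2 := by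
  classical
  set F : ℤ → ℤ → ℚ := fun i j =>
    ((ichoose (2 * n) (n + i) : ℚ) * (ichoose (2 * n) (n + j) : ℚ)
      * |(i : ℚ) ^ 2 * (j : ℚ) ^ 2 * ((i : ℚ) ^ 2 - (j : ℚ) ^ 2)|) with hF
  have hinner : ∀ i : ℤ, (∑ᶠ j : ℤ, F i j) = ∑ j ∈ Icc (-(n:ℤ)) (n:ℤ), F i j := by
    intro i
    apply finsum_eq_sum_of_support_subset
    intro j hj
    simp only [Function.mem_support, hF] at hj
    by_contra hmem
    exact hj (by rw [ich_zero (i := j) (by simpa using hmem)]; push_cast; ring)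
  have houter : (∑ᶠ i : ℤ, ∑ᶠ j : ℤ, F i j)
      = ∑ i ∈ Icc (-(n:ℤ)) (n:ℤ), ∑ j ∈ Icc (-(n:ℤ)) (n:ℤ), F i j := by
    rw [show (fun i => ∑ᶠ j : ℤ, F i j) = fun i => ∑ j ∈ Icc (-(n:ℤ)) (n:ℤ), F i j from
      funext hinner]
    apply finsum_eq_sum_of_support_subset
    intro i hi
    simp only [Function.mem_support] at hi
    by_contra hmem
    apply hi
    apply Finset.sum_eq_zero
    intro j _
    rw [hF]
    beta_reduce
    rw [ich_zero (by simpa using hmem)]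
    push_cast
    ring
  have heven : ∀ i j : ℤ, F (-i) j = F i j := by
    intro i j
    rw [hF]
    beta_reduce
    rw [ich_even]
    push_cast
    ring_nf
  have hevenj : ∀ i j : ℤ, F i (-j) = F i j := by
    intro i j
    rw [hF]
    beta_reduce
    rw [ich_even]
    push_cast
    ring_nf
  have hzeroj : ∀ i : ℤ, F i 0 = 0 := by
    intro i
    rw [hF]
    beta_reduce
    norm_num
  have hzeroi : ∀ j : ℤ, F 0 j = 0 := by
    intro j
    rw [hF]
    beta_reduce
    norm_num
  have hred : (∑ᶠ i : ℤ, ∑ᶠ j : ℤ, F i j) = 4 * SS n := by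
    rw [houter]
    rw [fold (fun i => ∑ j ∈ Icc (-(n:ℤ)) (n:ℤ), F i j)
      (fun i => by beta_reduce; exact Finset.sum_congr rfl (fun j _ => heven i j))
      (by beta_reduce; exact Finset.sum_eq_zero (fun j _ => hzeroi j))]
    have hin : ∀ i ∈ Icc 1 n, (∑ j ∈ Icc (-(n:ℤ)) (n:ℤ), F (i:ℤ) j)
        = 2 * ∑ j ∈ Icc 1 n, F (i:ℤ) (j:ℤ) :=
      fun i _ => fold (fun j => F (i:ℤ) j) (fun j => hevenj (i:ℤ) j) (hzeroj (i:ℤ))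
    rw [Finset.sum_congr rfl hin]
    have hSSeq : ∑ i ∈ Icc 1 n, ∑ j ∈ Icc 1 n, F (i:ℤ) (j:ℤ) = SS n := by
      unfold SS
      apply Finset.sum_congr rfl
      intro i _
      apply Finset.sum_congr rfl
      intro j _
      rw [hF]
      beta_reduce
      rw [ich_nat, ich_nat]
      push_cast
      ring_nf
    rw [show (∑ i ∈ Icc 1 n, 2 * ∑ j ∈ Icc 1 n, F (i:ℤ) (j:ℤ))
        = 2 * ∑ i ∈ Icc 1 n, ∑ j ∈ Icc 1 n, F (i:ℤ) (j:ℤ) from (Finset.mul_sum _ _ _).symm]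
    rw [hSSeq]
    ring
  rw [hred]
  rcases Nat.lt_or_ge n 2 with h1 | hn2
  · have : n = 1 := by omega
    subst this
    rw [show SS 1 = 0 by
      unfold SS
      norm_num]
    norm_num
  · have hc := core hn2
    have hnq : (2:ℚ) ≤ (n:ℚ) := by exact_mod_cast hn2
    have h2n1 : (2*(n:ℚ)-1) ≠ 0 := by intro hc2; nlinarith
    rw [hCC (by omega)]
    rw [show (2:ℚ) * (n:ℚ)^4 * ((n:ℚ)-1) / (2*(n:ℚ)-1) * (2 * bq n 1)^2
        = 8 * ((n:ℚ)^4 * ((n:ℚ)-1) * (bq n 1)^2) / (2*(n:ℚ)-1) by ring]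
    rw [eq_div_iff h2n1]
    linear_combination 4 * hc
end
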